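/- arXiv:2403.20307 — 4 statements merged into one kernel-verified Lean document; each statement's English description precedes it below -/
import Mathlib

section
/- For any integers s, t ≥ 1, c_f[s·t] ≤ c_f[s]·c_f[t], where c_f[m] is the smallest constant such that f(x_1+⋯+x_m) ≤ (c_f[m]/m)(√f(x_1)+⋯+√f(x_m))² for all nonnegative x_1,…,x_m. -/
open Finset

/-- `IsCf f m c` : `c` is the smallest positive real such that
`f (x₁ + ⋯ + x_m) ≤ (c/m) (√f(x₁) + ⋯ + √f(x_m))²` for all nonnegative `x₁,…,x_m`. -/
def IsCf (f : ℝ → ℝ) (m : ℕ) (c : ℝ) : Prop :=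
  IsLeast {c : ℝ | 0 < c ∧ ∀ x : Fin m → ℝ, (∀ i, 0 ≤ x i) →
    f (∑ i, x i) ≤ c / m * (∑ i, Real.sqrt (f (x i))) ^ 2} c

theorem cf_submultiplicative (f : ℝ → ℝ) (hf : ∀ x, 0 ≤ x → 0 ≤ f x)
    (s t : ℕ) (hs : 1 ≤ s) (ht : 1 ≤ t)
    (cs ct cst : ℝ) (hcs : IsCf f s cs) (hct : IsCf f t ct)
    (hcst : IsCf f (s * t) cst) :
    cst ≤ cs * ct := by
  have hcs0 := hcs.1.1
  have hct0 := hct.1.1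
  have hs0 : (0:ℝ) < s := by exact_mod_cast hs
  have ht0 : (0:ℝ) < t := by exact_mod_cast ht
  apply hcst.2
  refine ⟨mul_pos hcs0 hct0, ?_⟩
  intro x hx
  set e : Fin s × Fin t ≃ Fin (s * t) := finProdFinEquiv with he
  set y : Fin s → ℝ := fun j => ∑ k : Fin t, x (e (j, k)) with hy
  have hy0 : ∀ j, 0 ≤ y j := fun j => Finset.sum_nonneg fun k _ => hx _
  have hsum : ∑ i, x i = ∑ j, y j := by
    rw [← Equiv.sum_comp e x, Fintype.sum_prod_type]
  set S : ℝ := ∑ i, Real.sqrt (f (x i)) with hS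
  have hS0 : 0 ≤ S := Finset.sum_nonneg fun i _ => Real.sqrt_nonneg _
  have h1 : f (∑ i, x i) ≤ cs / s * (∑ j, Real.sqrt (f (y j))) ^ 2 := by
    rw [hsum]; exact hcs.1.2 y hy0
  have h2 : ∀ j, Real.sqrt (f (y j)) ≤
      Real.sqrt (ct / t) * ∑ k : Fin t, Real.sqrt (f (x (e (j, k)))) := by
    intro j
    have h := hct.1.2 (fun k => x (e (j, k))) (fun k => hx _)
    calc Real.sqrt (f (y j))
        ≤ Real.sqrt (ct / t * (∑ k : Fin t, Real.sqrt (f (x (e (j, k))))) ^ 2) :=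
          Real.sqrt_le_sqrt h
      _ = Real.sqrt (ct / t) * ∑ k, Real.sqrt (f (x (e (j, k)))) := by
          rw [Real.sqrt_mul (by positivity), Real.sqrt_sq (by positivity)]
  have h3 : ∑ j, Real.sqrt (f (y j)) ≤ Real.sqrt (ct / t) * S := by
    calc ∑ j, Real.sqrt (f (y j))
        ≤ ∑ j, Real.sqrt (ct / t) * ∑ k : Fin t, Real.sqrt (f (x (e (j, k)))) :=
          Finset.sum_le_sum fun j _ => h2 j
      _ = Real.sqrt (ct / t) * S := by
          rw [← Finset.mul_sum, hS, ← Equiv.sum_comp e (fun i => Real.sqrt (f (x i))),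
            Fintype.sum_prod_type]
  have h4 : (∑ j, Real.sqrt (f (y j))) ^ 2 ≤ (ct / t) * S ^ 2 := by
    have := pow_le_pow_left₀ (Finset.sum_nonneg fun j _ => Real.sqrt_nonneg _) h3 2
    rwa [mul_pow, Real.sq_sqrt (by positivity)] at this
  calc f (∑ i, x i) ≤ cs / s * (∑ j, Real.sqrt (f (y j))) ^ 2 := h1
    _ ≤ cs / s * ((ct / t) * S ^ 2) := by
        apply mul_le_mul_of_nonneg_left h4 (by positivity)
    _ = cs * ct / (↑(s * t)) * S ^ 2 := by push_cast; field_simp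
end

section
/- If s ≥ t ≥ 1 are integers, then c_f[s] ≥ c_f[t]·s/t. -/
open Finset

theorem cf_superlinear (f : ℝ → ℝ) (hf : ∀ x, 0 ≤ x → 0 ≤ f x) (hf0 : f 0 = 0)
    (s t : ℕ) (ht : 1 ≤ t) (hts : t ≤ s)
    (cs ct : ℝ) (hcs : IsCf f s cs) (hct : IsCf f t ct) :
    ct * s / t ≤ cs := by
  obtain ⟨⟨hcs_pos, hcs_ineq⟩, hcs_lb⟩ := hcs
  obtain ⟨hct_mem, hct_lb⟩ := hct
  have hs : 1 ≤ s := le_trans ht hts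
  have hspos : (0:ℝ) < s := by exact_mod_cast hs
  have htpos : (0:ℝ) < t := by exact_mod_cast ht
  have hmem : cs * t / s ∈ {c : ℝ | 0 < c ∧ ∀ x : Fin t → ℝ, (∀ i, 0 ≤ x i) →
      f (∑ i, x i) ≤ c / t * (∑ i, Real.sqrt (f (x i))) ^ 2} := by
    constructor
    · positivity
    · intro x hx
      set g : ℕ → ℝ := fun n => if h : n < t then x ⟨n, h⟩ else 0 with hg
      have hgt : ∀ i : Fin t, g i = x i := by
        intro i; simp [hg, i.isLt]
      have hg0 : ∀ i, 0 ≤ g i := by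
        intro i; dsimp [g]; split
        · exact hx _
        · exact le_rfl
      have hsub : Finset.range t ⊆ Finset.range s := Finset.range_subset_range.2 hts
      have hsum : ∑ i : Fin s, g i = ∑ i : Fin t, x i := by
        rw [Fin.sum_univ_eq_sum_range g s, ← Finset.sum_subset hsub]
        · rw [← Fin.sum_univ_eq_sum_range g t]
          exact Finset.sum_congr rfl fun i _ => by rw [hgt]
        · intro n _ hn
          simp only [Finset.mem_range, not_lt] at hn
          simp [hg, Nat.not_lt.2 hn]
      have hsum2 : ∑ i : Fin s, Real.sqrt (f (g i)) = ∑ i : Fin t, Real.sqrt (f (x i)) := by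
        rw [Fin.sum_univ_eq_sum_range (fun n => Real.sqrt (f (g n))) s,
          ← Finset.sum_subset hsub]
        · rw [← Fin.sum_univ_eq_sum_range (fun n => Real.sqrt (f (g n))) t]
          exact Finset.sum_congr rfl fun i _ => by rw [hgt]
        · intro n _ hn
          simp only [Finset.mem_range, not_lt] at hn
          simp [hg, Nat.not_lt.2 hn, hf0]
      have key := hcs_ineq (fun i => g i) (fun i => hg0 i)
      rw [hsum, hsum2] at key
      calc f (∑ i : Fin t, x i) ≤ cs / s * (∑ i : Fin t, Real.sqrt (f (x i))) ^ 2 := key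
        _ = cs * t / s / t * (∑ i : Fin t, Real.sqrt (f (x i))) ^ 2 := by
            field_simp
  have h := hct_lb hmem
  rw [div_le_iff₀ htpos]
  have h2 := (le_div_iff₀ hspos).mp h
  linarith
end

section
/- The Huber loss f_τ satisfies f_τ(x_1+⋯+x_s) ≤ (√f_τ(x_1)+⋯+√f_τ(x_s))² for all nonnegative x_1,…,x_s. -/
open Finset

/-- The Huber loss function with parameter `τ` (on nonnegative inputs). -/
noncomputable def huber (τ x : ℝ) : ℝ := if x ≤ τ then x ^ 2 / (2 * τ) else x - τ / 2

lemma huber_nonneg (τ x : ℝ) (hτ : 0 < τ) (hx : 0 ≤ x) : 0 ≤ huber τ x := by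
  unfold huber
  split
  · positivity
  · linarith

lemma sqrt_huber_small (τ a : ℝ) (hτ : 0 < τ) (ha : 0 ≤ a) (ha' : a ≤ τ) :
    Real.sqrt (huber τ a) = a / Real.sqrt (2 * τ) := by
  rw [huber, if_pos ha', Real.sqrt_div (sq_nonneg a), Real.sqrt_sq ha]

lemma huber_mixed (τ a b : ℝ) (hτ : 0 < τ) (ha : 0 ≤ a) (ha' : a ≤ τ) (hb' : τ < b) :
    a + b - τ / 2 ≤ (Real.sqrt (huber τ a) + Real.sqrt (huber τ b)) ^ 2 := by
  have hsb : Real.sqrt (huber τ b) = Real.sqrt (b - τ / 2) := by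
    rw [huber, if_neg (not_le.mpr hb')]
  rw [hsb, sqrt_huber_small τ a hτ ha ha']
  set sa := a / Real.sqrt (2 * τ) with hsa
  set sb := Real.sqrt (b - τ / 2) with hsbdef
  have h2τ : (0:ℝ) < 2 * τ := by linarith
  have hs2 : Real.sqrt (2 * τ) ^ 2 = 2 * τ := Real.sq_sqrt h2τ.le
  have hspos : 0 < Real.sqrt (2 * τ) := Real.sqrt_pos.mpr h2τ
  have hsa2 : sa ^ 2 = a ^ 2 / (2 * τ) := by
    rw [hsa, div_pow, hs2]
  have hsb2 : sb ^ 2 = b - τ / 2 := Real.sq_sqrt (by linarith)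
  have hsbnn : 0 ≤ sb := Real.sqrt_nonneg _
  -- key : a/2 ≤ sa * sb
  have hkey : a / 2 ≤ sa * sb := by
    have h1 : Real.sqrt (τ / 2) ≤ sb := by
      apply Real.sqrt_le_sqrt; linarith
    have h2 : Real.sqrt (τ / 2) * Real.sqrt (2 * τ) = τ := by
      rw [← Real.sqrt_mul (by linarith) (2 * τ)]
      rw [show τ / 2 * (2 * τ) = τ ^ 2 by ring, Real.sqrt_sq hτ.le]
    have hhalf : Real.sqrt (τ / 2) / Real.sqrt (2 * τ) = 1 / 2 := by
      rw [← Real.sqrt_div (by linarith : (0:ℝ) ≤ τ / 2),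
        show τ / 2 / (2 * τ) = ((1:ℝ)/2) ^ 2 by field_simp,
        Real.sqrt_sq (by norm_num)]
    have h3 : sa * Real.sqrt (τ / 2) = a / 2 := by
      rw [hsa, div_mul_eq_mul_div, mul_div_assoc, hhalf]; ring
    have hann : 0 ≤ sa := by rw [hsa]; positivity
    calc a / 2 = sa * Real.sqrt (τ / 2) := h3.symm
      _ ≤ sa * sb := mul_le_mul_of_nonneg_left h1 hann
  have hanonneg : 0 ≤ a ^ 2 / (2 * τ) := by positivity
  nlinarith [hsa2, hsb2, hkey, hanonneg]

lemma huber_key (τ a b : ℝ) (hτ : 0 < τ) (ha : 0 ≤ a) (hb : 0 ≤ b) :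
    huber τ (a + b) ≤ (Real.sqrt (huber τ a) + Real.sqrt (huber τ b)) ^ 2 := by
  have h2τ : (0:ℝ) < 2 * τ := by linarith
  by_cases hab : a + b ≤ τ
  · have ha' : a ≤ τ := by linarith
    have hb' : b ≤ τ := by linarith
    rw [huber, if_pos hab, sqrt_huber_small τ a hτ ha ha', sqrt_huber_small τ b hτ hb hb',
      ← add_div, div_pow, Real.sq_sqrt h2τ.le]
  · push_neg at hab
    rw [huber, if_neg (not_le.mpr hab)]
    by_cases ha' : a ≤ τ
    · by_cases hb' : b ≤ τ
      · rw [sqrt_huber_small τ a hτ ha ha', sqrt_huber_small τ b hτ hb hb',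
          ← add_div, div_pow, Real.sq_sqrt h2τ.le]
        rw [le_div_iff₀ h2τ]
        nlinarith [sq_nonneg (a + b - τ)]
      · exact huber_mixed τ a b hτ ha ha' (not_le.mp hb')
    · push_neg at ha'
      by_cases hb' : b ≤ τ
      · have := huber_mixed τ b a hτ hb hb' ha'
        rw [show b + a - τ/2 = a + b - τ/2 by ring, add_comm (Real.sqrt (huber τ b))] at this
        exact this
      · push_neg at hb'
        have hsa : Real.sqrt (huber τ a) = Real.sqrt (a - τ / 2) := by
          rw [huber, if_neg (not_le.mpr ha')]
        have hsb : Real.sqrt (huber τ b) = Real.sqrt (b - τ / 2) := by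
          rw [huber, if_neg (not_le.mpr hb')]
        rw [hsa, hsb]
        set sa := Real.sqrt (a - τ / 2)
        set sb := Real.sqrt (b - τ / 2)
        have hsa2 : sa ^ 2 = a - τ / 2 := Real.sq_sqrt (by linarith)
        have hsb2 : sb ^ 2 = b - τ / 2 := Real.sq_sqrt (by linarith)
        have hkey : τ / 2 ≤ sa * sb := by
          have : sa * sb = Real.sqrt ((a - τ/2) * (b - τ/2)) :=
            (Real.sqrt_mul (by linarith) _).symm
          rw [this]
          have : Real.sqrt ((τ/2)^2) ≤ Real.sqrt ((a - τ/2) * (b - τ/2)) := by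
            apply Real.sqrt_le_sqrt; nlinarith
          rwa [Real.sqrt_sq (by linarith)] at this
        nlinarith [hsa2, hsb2, hkey]

lemma sqrt_huber_sum {ι : Type*} (τ : ℝ) (hτ : 0 < τ) (t : Finset ι) (x : ι → ℝ)
    (hx : ∀ i, 0 ≤ x i) :
    Real.sqrt (huber τ (∑ i ∈ t, x i)) ≤ ∑ i ∈ t, Real.sqrt (huber τ (x i)) := by
  induction t using Finset.cons_induction with
  | empty => simp [huber, hτ.le]
  | cons i t hi ih =>
    rw [Finset.sum_cons, Finset.sum_cons]
    have hsum : 0 ≤ ∑ j ∈ t, x j := Finset.sum_nonneg fun j _ => hx j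
    have h1 := huber_key τ (x i) (∑ j ∈ t, x j) hτ (hx i) hsum
    have h2 : Real.sqrt (huber τ (x i + ∑ j ∈ t, x j)) ≤
        Real.sqrt (huber τ (x i)) + Real.sqrt (huber τ (∑ j ∈ t, x j)) := by
      have := Real.sqrt_le_sqrt h1
      rwa [Real.sqrt_sq (by positivity)] at this
    exact h2.trans (add_le_add_right ih _)

theorem huber_cf_le (τ : ℝ) (hτ : 0 < τ) (s : ℕ) (x : Fin s → ℝ) (hx : ∀ i, 0 ≤ x i) :
    huber τ (∑ i, x i) ≤ (∑ i, Real.sqrt (huber τ (x i))) ^ 2 := by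
  have hsum : 0 ≤ ∑ i, x i := Finset.sum_nonneg fun i _ => hx i
  have h1 : huber τ (∑ i, x i) = Real.sqrt (huber τ (∑ i, x i)) ^ 2 :=
    (Real.sq_sqrt (huber_nonneg τ _ hτ hsum)).symm
  rw [h1]
  exact pow_le_pow_left₀ (Real.sqrt_nonneg _) (sqrt_huber_sum τ hτ Finset.univ x hx) 2
end

section
/- Let f₁,…,f_n ≥ 0 with Σf_i > 0, let E₁,…,E_n be independent standard exponential random variables, and fix ε > 0. For each i, f_i/(Σ_j f_j) ≥ P[ f_i/E_i ≥ (1+ε)·max_{j≠i} f_j/E_j ] ≥ f_i / ((1+ε)·Σ_j f_j). -/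
open Finset MeasureTheory ProbabilityTheory Real Set

lemma expMeasure_apply' (s : Set ℝ) (hs : MeasurableSet s) :
    expMeasure 1 s = ∫⁻ x in s, exponentialPDF 1 x := by
  rw [expMeasure, gammaMeasure, withDensity_apply _ hs]; rfl

lemma expMeasure_Iic (x : ℝ) :
    expMeasure 1 (Iic x) = ENNReal.ofReal (if 0 ≤ x then 1 - Real.exp (-x) else 0) := by
  rw [expMeasure_apply' _ measurableSet_Iic, lintegral_exponentialPDF_eq_antiDeriv one_pos]
  simp [one_mul]

lemma expMeasure_singleton (t : ℝ) : expMeasure 1 {t} = 0 := by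
  rw [expMeasure, gammaMeasure]
  exact (withDensity_absolutelyContinuous _ _) (Real.volume_singleton)

lemma expMeasure_Iio (x : ℝ) :
    expMeasure 1 (Iio x) = ENNReal.ofReal (if 0 ≤ x then 1 - Real.exp (-x) else 0) := by
  refine le_antisymm ?_ ?_
  · rw [← expMeasure_Iic]; exact measure_mono Iio_subset_Iic_self
  · rw [← expMeasure_Iic]
    calc expMeasure 1 (Iic x) ≤ expMeasure 1 (Iio x) + expMeasure 1 {x} := by
          rw [← Iio_union_right]; exact measure_union_le _ _
    _ = expMeasure 1 (Iio x) := by rw [expMeasure_singleton, add_zero]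

lemma expMeasure_Ici {t : ℝ} (ht : 0 ≤ t) :
    expMeasure 1 (Ici t) = ENNReal.ofReal (Real.exp (-t)) := by
  haveI : IsProbabilityMeasure (expMeasure 1) := isProbabilityMeasure_expMeasure one_pos
  have h1 : Real.exp (-t) ≤ 1 := by
    rw [Real.exp_le_one_iff]; linarith
  rw [← compl_Iio, measure_compl measurableSet_Iio (measure_ne_top _ _), expMeasure_Iio,
    if_pos ht, measure_univ, ← ENNReal.ofReal_one, ← ENNReal.ofReal_sub _ (by linarith)]
  ring_nf

lemma expMeasure_neg_null : expMeasure 1 (Iio 0) = 0 := by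
  rw [expMeasure_Iio]; simp

lemma lintegral_exp_neg_expMeasure {l : ℝ} (hl : 0 ≤ l) :
    ∫⁻ t, ENNReal.ofReal (Real.exp (-(l * t))) ∂(expMeasure 1)
      = ENNReal.ofReal (1 / (1 + l)) := by
  have hpos : (0:ℝ) < 1 + l := by linarith
  have hmf : Measurable fun t : ℝ => ENNReal.ofReal (Real.exp (-(l * t))) :=
    (((measurable_id.const_mul l).neg).exp).ennreal_ofReal
  have hg : Measurable (exponentialPDF 1) := by
    unfold exponentialPDF
    exact (measurable_exponentialPDFReal 1).ennreal_ofReal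
  rw [expMeasure, gammaMeasure]
  have : ∫⁻ t, ENNReal.ofReal (Real.exp (-(l * t)))
      ∂(volume.withDensity (gammaPDF 1 1))
      = ∫⁻ t, ((exponentialPDF 1) * fun t => ENNReal.ofReal (Real.exp (-(l * t)))) t ∂volume := by
    exact lintegral_withDensity_eq_lintegral_mul volume hg hmf
  rw [this]
  have key : ∀ t : ℝ, ((exponentialPDF 1) * fun t => ENNReal.ofReal (Real.exp (-(l * t)))) t
      = ENNReal.ofReal (1 / (1 + l)) * exponentialPDF (1 + l) t := by
    intro t
    rcases le_or_gt 0 t with ht | ht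
    · rw [Pi.mul_apply, exponentialPDF_of_nonneg ht, exponentialPDF_of_nonneg ht,
        ← ENNReal.ofReal_mul (by positivity), ← ENNReal.ofReal_mul (by positivity)]
      rw [one_mul, ← Real.exp_add, show -(1 * t) + -(l * t) = -((1+l)*t) by ring]
      field_simp
    · rw [Pi.mul_apply, exponentialPDF_of_neg ht, exponentialPDF_of_neg ht, zero_mul, mul_zero]
  simp_rw [key]
  rw [lintegral_const_mul _ (by
    unfold exponentialPDF
    exact (measurable_exponentialPDFReal _).ennreal_ofReal),
    lintegral_exponentialPDF_eq_one hpos, mul_one]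

lemma map_eq_expMeasure {Ω : Type*} [MeasurableSpace Ω] (μ : Measure Ω) [IsProbabilityMeasure μ]
    (X : Ω → ℝ) (hX : Measurable X)
    (h : ∀ s : ℝ, 0 ≤ s → μ {ω | X ω ≤ s} = ENNReal.ofReal (1 - Real.exp (-s))) :
    μ.map X = expMeasure 1 := by
  haveI := Measure.isProbabilityMeasure_map hX.aemeasurable (μ := μ)
  refine Measure.ext_of_Iic _ _ (fun a => ?_)
  rw [Measure.map_apply hX measurableSet_Iic, expMeasure_Iic]
  by_cases ha : 0 ≤ a
  · rw [if_pos ha]; exact h a ha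
  · rw [if_neg ha, ENNReal.ofReal_zero]
    have h0 : μ {ω | X ω ≤ 0} = 0 := by rw [h 0 le_rfl]; simp
    exact measure_mono_null (fun ω hω => le_trans hω (le_of_not_ge ha)) h0

lemma survival {Ω : Type*} [MeasurableSpace Ω] (μ : Measure Ω) [IsProbabilityMeasure μ]
    (X : Ω → ℝ) (hX : Measurable X)
    (h : ∀ s : ℝ, 0 ≤ s → μ {ω | X ω ≤ s} = ENNReal.ofReal (1 - Real.exp (-s)))
    {t : ℝ} (ht : 0 ≤ t) : μ {ω | t ≤ X ω} = ENNReal.ofReal (Real.exp (-t)) := by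
  have : {ω | t ≤ X ω} = X ⁻¹' Ici t := rfl
  rw [this, ← Measure.map_apply hX measurableSet_Ici, map_eq_expMeasure μ X hX h,
    expMeasure_Ici ht]

lemma prob_inter_ge {Ω : Type*} [MeasurableSpace Ω] (μ : Measure Ω) [IsProbabilityMeasure μ]
    (n : ℕ) (E : Fin n → Ω → ℝ)
    (hmeas : ∀ i, Measurable (E i))
    (hindep : iIndepFun E μ)
    (hexp : ∀ i, ∀ s : ℝ, 0 ≤ s →
      μ {ω | E i ω ≤ s} = ENNReal.ofReal (1 - Real.exp (-s)))
    (i : Fin n) (c : Fin n → ℝ) (hc : ∀ j, 0 ≤ c j) :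
    μ {ω | ∀ j : (univ.erase i : Finset (Fin n)), c j * E i ω ≤ E (j : Fin n) ω}
      = ENNReal.ofReal (1 / (1 + ∑ j ∈ univ.erase i, c j)) := by
  classical
  set T : Finset (Fin n) := univ.erase i with hT
  set l : ℝ := ∑ j ∈ T, c j with hl
  have hl0 : 0 ≤ l := Finset.sum_nonneg fun j _ => hc j
  set G : Ω → ({x // x ∈ T} → ℝ) := fun ω j => E (j : Fin n) ω with hGdef
  have hG : Measurable G := measurable_pi_lambda _ fun j => hmeas _
  have hEiG : IndepFun (E i) G μ := by
    have h1 := hindep.indepFun_finset {i} T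
      (by simp [Finset.disjoint_left, hT]) hmeas
    exact h1.comp (measurable_pi_apply (⟨i, Finset.mem_singleton_self i⟩ :
      {x // x ∈ ({i} : Finset (Fin n))})) measurable_id
  haveI := Measure.isProbabilityMeasure_map hG.aemeasurable (μ := μ)
  haveI := Measure.isProbabilityMeasure_map (hmeas i).aemeasurable (μ := μ)
  set Tset : Set (ℝ × ({x // x ∈ T} → ℝ)) := {p | ∀ j : {x // x ∈ T}, c j * p.1 ≤ p.2 j}
    with hTsetdef
  have hTm : MeasurableSet Tset := by
    rw [hTsetdef, Set.setOf_forall]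
    exact MeasurableSet.iInter fun j => measurableSet_le (measurable_const.mul measurable_fst)
      ((measurable_pi_apply j).comp measurable_snd)
  have hmap_pair : μ.map (fun ω => (E i ω, G ω)) = (μ.map (E i)).prod (μ.map G) :=
    (indepFun_iff_map_prod_eq_prod_map_map (hmeas i).aemeasurable hG.aemeasurable).mp hEiG
  have hBeq : {ω | ∀ j : {x // x ∈ T}, c j * E i ω ≤ E (j : Fin n) ω}
      = (fun ω => (E i ω, G ω)) ⁻¹' Tset := rfl
  rw [hBeq, ← Measure.map_apply ((hmeas i).prodMk hG) hTm, hmap_pair,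
    Measure.prod_apply hTm]
  have hslice : ∀ t : ℝ, 0 ≤ t →
      (μ.map G) (Prod.mk t ⁻¹' Tset) = ENNReal.ofReal (Real.exp (-(l * t))) := by
    intro t ht
    have hset : Prod.mk t ⁻¹' Tset = {y : {x // x ∈ T} → ℝ | ∀ j : {x // x ∈ T}, c (j : Fin n) * t ≤ y j} := rfl
    have hsetm : MeasurableSet {y : {x // x ∈ T} → ℝ | ∀ j : {x // x ∈ T}, c (j : Fin n) * t ≤ y j} := by
      rw [Set.setOf_forall]
      exact MeasurableSet.iInter fun j => measurableSet_le measurable_const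
        (measurable_pi_apply j)
    rw [hset, Measure.map_apply hG hsetm]
    have hpre : G ⁻¹' {y : {x // x ∈ T} → ℝ | ∀ j : {x // x ∈ T}, c (j : Fin n) * t ≤ y j}
        = ⋂ j ∈ T, (E j ⁻¹' Ici (c j * t)) := by
      ext ω
      simp only [Set.mem_preimage, Set.mem_setOf_eq, Set.mem_iInter, Set.mem_Ici, Subtype.forall]
      exact Iff.rfl
    rw [hpre, hindep.meas_biInter (fun j _ => ⟨Ici (c j * t), measurableSet_Ici, rfl⟩)]
    have hfac : ∀ j ∈ T, μ (E j ⁻¹' Ici (c j * t)) = ENNReal.ofReal (Real.exp (-(c j * t))) := by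
      intro j _
      exact survival μ (E j) (hmeas j) (hexp j) (mul_nonneg (hc j) ht)
    rw [Finset.prod_congr rfl hfac,
      ← ENNReal.ofReal_prod_of_nonneg (fun j _ => (Real.exp_pos _).le)]
    congr 1
    rw [← Real.exp_sum]
    congr 1
    rw [Finset.sum_mul, ← Finset.sum_neg_distrib]
  have hmapi : μ.map (E i) = expMeasure 1 := map_eq_expMeasure μ (E i) (hmeas i) (hexp i)
  rw [hmapi]
  have hae : ∀ᵐ t ∂(expMeasure 1), 0 ≤ t := by
    rw [ae_iff]
    refine measure_mono_null (fun t ht => ?_) expMeasure_neg_null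
    simpa using ht
  rw [lintegral_congr_ae (hae.mono fun t ht => hslice t ht)]
  exact lintegral_exp_neg_expMeasure hl0

lemma ineq_iff {a b fi x y : ℝ} (hx : 0 < x) (hy : 0 < y) (hfi : 0 < fi) :
    a * (b / x) ≤ fi / y ↔ a * b / fi * y ≤ x := by
  rw [mul_div_assoc', div_le_div_iff₀ hx hy, div_mul_eq_mul_div, div_le_iff₀ hfi]
  constructor <;> intro h <;> nlinarith

theorem exponential_max_gap_probability
    {Ω : Type*} [MeasurableSpace Ω] (μ : Measure Ω) [IsProbabilityMeasure μ]
    (n : ℕ) (E : Fin n → Ω → ℝ)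
    (hmeas : ∀ i, Measurable (E i))
    (hindep : iIndepFun E μ)
    (hexp : ∀ i, ∀ s : ℝ, 0 ≤ s →
      μ {ω | E i ω ≤ s} = ENNReal.ofReal (1 - Real.exp (-s)))
    (f : Fin n → ℝ) (hf : ∀ i, 0 ≤ f i) (hpos : 0 < ∑ i, f i)
    (ε : ℝ) (hε : 0 < ε) :
    ∀ i,
      ENNReal.ofReal (f i / ((1 + ε) * ∑ j, f j)) ≤
        μ {ω | ∀ j, j ≠ i → (1 + ε) * (f j / E j ω) ≤ f i / E i ω} ∧
      μ {ω | ∀ j, j ≠ i → (1 + ε) * (f j / E j ω) ≤ f i / E i ω} ≤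
        ENNReal.ofReal (f i / ∑ j, f j) := by
  intro i
  classical
  have hN : μ (⋃ j, {ω | E j ω ≤ 0}) = 0 :=
    measure_iUnion_null fun j => by rw [hexp j 0 le_rfl]; simp
  rcases eq_or_lt_of_le (hf i) with hfi | hfi
  · -- f i = 0
    obtain ⟨j0, hj0⟩ : ∃ j, 0 < f j := by
      by_contra h; push_neg at h
      exact absurd (Finset.sum_nonpos fun j _ => h j) (not_le.2 hpos)
    have hj0i : j0 ≠ i := fun h => by rw [h] at hj0; linarith
    have hsub : {ω | ∀ j, j ≠ i → (1 + ε) * (f j / E j ω) ≤ f i / E i ω}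
        ⊆ {ω | E j0 ω ≤ 0} := by
      intro ω hω
      have h1 := hω j0 hj0i
      rw [← hfi, zero_div] at h1
      show E j0 ω ≤ 0
      by_contra hE
      push_neg at hE
      have := div_pos hj0 hE
      nlinarith
    have hA0 : μ {ω | ∀ j, j ≠ i → (1 + ε) * (f j / E j ω) ≤ f i / E i ω} = 0 :=
      measure_mono_null hsub (by rw [hexp j0 0 le_rfl]; simp)
    constructor
    · rw [← hfi, zero_div, ENNReal.ofReal_zero]; exact zero_le
    · rw [hA0]; exact zero_le
  · -- 0 < f i
    set c : Fin n → ℝ := fun j => (1 + ε) * f j / f i with hc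
    have hc0 : ∀ j, 0 ≤ c j := fun j => div_nonneg (by nlinarith [hf j]) hfi.le
    have hμB := prob_inter_ge μ n E hmeas hindep hexp i c hc0
    have hiff : ∀ ω, (∀ j, 0 < E j ω) →
        ((∀ j, j ≠ i → (1 + ε) * (f j / E j ω) ≤ f i / E i ω) ↔
          (∀ j : (univ.erase i : Finset (Fin n)), c (j : Fin n) * E i ω ≤ E (j : Fin n) ω)) := by
      intro ω hposE
      have key : ∀ j : Fin n, ((1 + ε) * (f j / E j ω) ≤ f i / E i ω ↔ c j * E i ω ≤ E j ω) :=
        fun j => ineq_iff (hposE j) (hposE i) hfi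
      constructor
      · intro h j
        exact (key j).1 (h j (Finset.ne_of_mem_erase j.2))
      · intro h j hj
        exact (key j).2 (h ⟨j, Finset.mem_erase.2 ⟨hj, Finset.mem_univ j⟩⟩)
    have hAB : μ {ω | ∀ j, j ≠ i → (1 + ε) * (f j / E j ω) ≤ f i / E i ω}
        = μ {ω | ∀ j : (univ.erase i : Finset (Fin n)),
            c (j : Fin n) * E i ω ≤ E (j : Fin n) ω} := by
      refine measure_congr (Filter.eventuallyEq_set.2 ?_)
      have hpos' : ∀ᵐ ω ∂μ, ∀ j, 0 < E j ω := by
        rw [ae_iff]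
        refine measure_mono_null (fun ω hω => ?_) hN
        have : ¬ ∀ j, 0 < E j ω := hω
        push_neg at this
        obtain ⟨j, hj⟩ := this
        exact Set.mem_iUnion.2 ⟨j, hj⟩
      exact hpos'.mono fun ω h => hiff ω h
    rw [hAB, hμB]
    set S' : ℝ := ∑ j ∈ univ.erase i, f j with hS'
    have hS'0 : 0 ≤ S' := Finset.sum_nonneg fun j _ => hf j
    have hsum : S' + f i = ∑ j, f j := Finset.sum_erase_add _ _ (Finset.mem_univ i)
    have hlval : ∑ j ∈ univ.erase i, c j = (1 + ε) * S' / f i := by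
      simp only [hc, hS']
      rw [← Finset.sum_div, ← Finset.mul_sum]
    rw [hlval]
    have hq0 : 0 ≤ (1 + ε) * S' / f i := div_nonneg (by nlinarith) hfi.le
    have hden : (0:ℝ) < 1 + (1 + ε) * S' / f i := by linarith
    have hfid : f i * (1 + (1 + ε) * S' / f i) = f i + (1 + ε) * S' := by
      field_simp
    constructor
    · apply ENNReal.ofReal_le_ofReal
      rw [div_le_div_iff₀ (by nlinarith) hden, hfid]
      nlinarith [mul_nonneg hε.le hfi.le]
    · apply ENNReal.ofReal_le_ofReal
      rw [div_le_div_iff₀ hden (by linarith), hfid]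
      nlinarith [mul_nonneg hε.le hS'0]
end
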